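/- arXiv:0904.4676 — 4 statements merged into one kernel-verified Lean document; each statement's English description precedes it below -/
import Mathlib

section
/- Define Q(y) = U_n''(y)/(U_n(y) − U_n(1/2)) = −16π²nA·sin(4nπy)/(y − 1/2 + (A/n)·sin(4nπy)). Then for y' = y − 1/2 with |y'| ≤ 1/(8n) and y' ≠ 0, one has Q(y) ≤ −2(8π)²n²A/(1 + 4πA). -/
open Real Set

lemma oscillatory_helper
    (n : ℕ) (hn : 1 ≤ n) (A : ℝ) (hA1 : 1 / (8 * π) < A) (hA2 : A < 1 / (4 * π))
    (z : ℝ) (hz0 : 0 < z) (hz1 : z ≤ 1 / (8 * n)) :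
    (-16 * π ^ 2 * n * A * Real.sin (4 * n * π * z)) /
      (z + (A / n) * Real.sin (4 * n * π * z))
      ≤ -2 * (8 * π) ^ 2 * n ^ 2 * A / (1 + 4 * π * A) := by
  have hπ := Real.pi_pos
  have hn' : (1:ℝ) ≤ n := by exact_mod_cast hn
  have hn0 : (0:ℝ) < n := by linarith
  have hA0 : 0 < A := lt_trans (by positivity) hA1
  set t := 4 * (n:ℝ) * π * z with ht
  have ht0 : 0 < t := by positivity
  have ht2 : t ≤ π / 2 := by
    have h : 4 * (n:ℝ) * π * z ≤ 4 * n * π * (1/(8*n)) :=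
      mul_le_mul_of_nonneg_left hz1 (by positivity)
    have h2 : 4 * (n:ℝ) * π * (1/(8*n)) = π / 2 := by field_simp; ring
    rw [ht]; linarith
  have hsinle : Real.sin t ≤ t := Real.sin_le ht0.le
  have hsinge : 2/π * t ≤ Real.sin t := Real.mul_le_sin ht0.le ht2
  have hsge : 8 * n * z ≤ Real.sin t := by
    have h : 2/π * t = 8*n*z := by rw [ht]; field_simp; ring
    linarith
  have hspos : 0 < Real.sin t := lt_of_lt_of_le (by positivity) hsge
  have hDle : (A/n) * Real.sin t ≤ 4*π*A*z := by
    have h1 : (A/n) * Real.sin t ≤ (A/n) * t :=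
      mul_le_mul_of_nonneg_left hsinle (by positivity)
    have h2 : (A/n) * t = 4*π*A*z := by rw [ht]; field_simp
    linarith
  have hD0 : 0 < z + (A/n) * Real.sin t := by positivity
  have hP0 : 0 < 1 + 4*π*A := by positivity
  rw [div_le_div_iff₀ hD0 hP0]
  nlinarith [mul_le_mul_of_nonneg_left hDle
      (show (0:ℝ) ≤ 128*π^2*n^2*A by positivity),
    mul_le_mul_of_nonneg_right hsge
      (show (0:ℝ) ≤ 16*π^2*n*A*(1+4*π*A) by positivity)]

theorem oscillatory_shear_potential_bound
    (n : ℕ) (hn : 1 ≤ n) (A : ℝ) (hA1 : 1 / (8 * π) < A) (hA2 : A < 1 / (4 * π))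
    (y : ℝ) (hy1 : |y - 1/2| ≤ 1 / (8 * n)) (hy2 : y ≠ 1/2) :
    (-16 * π ^ 2 * n * A * Real.sin (4 * n * π * y)) /
      (y - 1/2 + (A / n) * Real.sin (4 * n * π * y))
      ≤ -2 * (8 * π) ^ 2 * n ^ 2 * A / (1 + 4 * π * A) := by
  have hper : Real.sin (4*n*π*y) = Real.sin (4*n*π*(y-1/2)) := by
    have h : 4*(n:ℝ)*π*y = 4*n*π*(y-1/2) + n*(2*π) := by ring
    rw [h, Real.sin_add_nat_mul_two_pi]
  rcases lt_or_gt_of_ne (sub_ne_zero.mpr hy2) with hz | hz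
  · -- y - 1/2 < 0
    have hz1 : 1/2 - y ≤ 1 / (8 * n) := by
      rw [abs_of_neg hz] at hy1; linarith
    have key := oscillatory_helper n hn A hA1 hA2 (1/2 - y) (by linarith) hz1
    have hsin : Real.sin (4*n*π*(y-1/2)) = -Real.sin (4*(n:ℝ)*π*(1/2-y)) := by
      rw [show (4:ℝ)*n*π*(y-1/2) = -(4*n*π*(1/2-y)) by ring, Real.sin_neg]
    rw [hper, hsin,
      show y - 1/2 + (A / n) * -Real.sin (4*(n:ℝ)*π*(1/2-y))
        = -((1/2 - y) + (A / n) * Real.sin (4*(n:ℝ)*π*(1/2-y))) by ring,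
      show (-16 * π ^ 2 * (n:ℝ) * A * -Real.sin (4*(n:ℝ)*π*(1/2-y)))
        = -(-16 * π ^ 2 * (n:ℝ) * A * Real.sin (4*(n:ℝ)*π*(1/2-y))) by ring,
      neg_div_neg_eq]
    exact key
  · -- y - 1/2 > 0
    have hz1 : y - 1/2 ≤ 1 / (8 * n) := by rw [abs_of_pos hz] at hy1; linarith
    have key := oscillatory_helper n hn A hA1 hA2 (y - 1/2) hz hz1
    rw [hper]
    exact key
end

section
/- For η ∈ [0, 1/(8n)], one has the cancellation inequality Q̃(1/(4n) − η)·φ(1/(4n) − η)² + Q̃(1/(4n) + η)·φ(1/(4n) + η)² ≤ 0, where Q̃(y') = Q(y' + 1/2). Consequently ∫_{1/(8n)}^{3/(8n)} Q̃ φ² dy' ≤ 0. -/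
open Real Set intervalIntegral

/-- The piecewise-linear test function in the shifted variable `y' = y - 1/2`. -/
noncomputable def testFunShift (n : ℕ) (y' : ℝ) : ℝ :=
  if |y'| ≤ 1 / (8 * n) then 1 / (4 * n)
  else if |y'| ≤ 3 / (8 * n) then 3 / (8 * n) - |y'|
  else 0

/-- The shifted Rayleigh potential `Q̃(y') = Q(y' + 1/2)` of the oscillatory shear. -/
noncomputable def oscQshift (n : ℕ) (A : ℝ) (y' : ℝ) : ℝ :=
  (-16 * π ^ 2 * n * A * Real.sin (4 * n * π * (y' + 1/2))) /
    ((y' + 1/2) + (A / n) * Real.sin (4 * n * π * (y' + 1/2)) - 1/2)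

lemma testFunShift_eq (n : ℕ) (hn : 1 ≤ n) {y : ℝ} (h1 : 1 / (8 * (n:ℝ)) ≤ y)
    (h2 : y ≤ 3 / (8 * (n:ℝ))) : testFunShift n y = 3 / (8 * (n:ℝ)) - y := by
  have hn0 : (0:ℝ) < n := by exact_mod_cast hn
  have hy0 : 0 ≤ y := le_trans (by positivity) h1
  unfold testFunShift
  rw [abs_of_nonneg hy0]
  split_ifs with h
  · have hy : y = 1 / (8 * (n:ℝ)) := le_antisymm h h1
    rw [hy]
    field_simp
    ring
  · rfl

lemma cancellation_pointwise
    (n : ℕ) (hn : 1 ≤ n) (A : ℝ) (hA1 : 1 / (8 * π) < A) (hA2 : A < 1 / (4 * π)) :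
    ∀ η ∈ Set.Icc (0:ℝ) (1 / (8 * n)),
      oscQshift n A (1 / (4 * n) - η) * (testFunShift n (1 / (4 * n) - η)) ^ 2 +
        oscQshift n A (1 / (4 * n) + η) * (testFunShift n (1 / (4 * n) + η)) ^ 2 ≤ 0 := by
  have hn0 : (0:ℝ) < n := by exact_mod_cast hn
  have hπ : (0:ℝ) < π := pi_pos
  have hA0 : 0 < A := lt_trans (by positivity) hA1
  rintro η ⟨hη0, hη1⟩
  have ha0 : (0:ℝ) < 1 / (8 * (n:ℝ)) := by positivity
  -- trig identities
  have hang1 : 4 * (n:ℝ) * π * ((1 / (4 * n) - η) + 1/2) = (π - 4 * n * π * η) + n * (2 * π) := by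
    field_simp; ring
  have hang2 : 4 * (n:ℝ) * π * ((1 / (4 * n) + η) + 1/2) = ((4 * n * π * η) + π) + n * (2 * π) := by
    field_simp; ring
  have hs1 : Real.sin (4 * (n:ℝ) * π * ((1 / (4 * n) - η) + 1/2)) = Real.sin (4 * n * π * η) := by
    rw [hang1, Real.sin_add_nat_mul_two_pi, Real.sin_pi_sub]
  have hs2 : Real.sin (4 * (n:ℝ) * π * ((1 / (4 * n) + η) + 1/2))
      = -Real.sin (4 * n * π * η) := by
    rw [hang2, Real.sin_add_nat_mul_two_pi, Real.sin_add_pi]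
  set s := Real.sin (4 * (n:ℝ) * π * η) with hs_def
  have harg0 : 0 ≤ 4 * (n:ℝ) * π * η := by positivity
  have hargπ : 4 * (n:ℝ) * π * η ≤ π := by
    have h := mul_le_mul_of_nonneg_left hη1 (le_of_lt (show (0:ℝ) < 4 * n * π by positivity))
    have : 4 * (n:ℝ) * π * (1 / (8 * n)) = π / 2 := by field_simp; ring
    nlinarith
  have hs_nonneg : 0 ≤ s := Real.sin_nonneg_of_nonneg_of_le_pi harg0 hargπ
  have hs_le : s ≤ 4 * (n:ℝ) * π * η := Real.sin_le harg0
  have ht0 : 0 ≤ A / n * s := by positivity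
  have htη : A / n * s ≤ η := by
    have h1 : A / n * s ≤ A / n * (4 * n * π * η) :=
      mul_le_mul_of_nonneg_left hs_le (by positivity)
    have h2 : A / (n:ℝ) * (4 * n * π * η) = 4 * π * A * η := by field_simp
    have h3 : 4 * π * A < 1 := by
      have h4 := mul_lt_mul_of_pos_left hA2 (show (0:ℝ) < 4 * π by positivity)
      have h5 : 4 * π * (1 / (4 * π)) = 1 := by field_simp
      linarith
    nlinarith
  -- test function values
  have hm2a : (1:ℝ) / (4 * n) = 2 * (1 / (8 * n)) := by field_simp; ring
  have hb3a : (3:ℝ) / (8 * n) = 3 * (1 / (8 * n)) := by ring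
  have ht1 : testFunShift n (1 / (4 * n) - η) = 1 / (8 * (n:ℝ)) + η := by
    rw [testFunShift_eq n hn (by rw [hm2a]; linarith) (by rw [hm2a, hb3a]; linarith)]
    rw [hm2a, hb3a]; ring
  have ht2 : testFunShift n (1 / (4 * n) + η) = 1 / (8 * (n:ℝ)) - η := by
    rw [testFunShift_eq n hn (by rw [hm2a]; linarith) (by rw [hm2a, hb3a]; linarith)]
    rw [hm2a, hb3a]; ring
  unfold oscQshift
  rw [hs1, hs2, ht1, ht2]
  set a := (1:ℝ) / (8 * n) with ha_def
  set D1 := ((1 / (4 * (n:ℝ)) - η) + 1/2) + (A / n) * s - 1/2 with hD1_def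
  set D2 := ((1 / (4 * (n:ℝ)) + η) + 1/2) + (A / n) * (-s) - 1/2 with hD2_def
  have hD1pos : 0 < D1 := by rw [hD1_def, hm2a]; linarith
  have hD2pos : 0 < D2 := by rw [hD2_def, hm2a]; linarith
  have hsq : (a - η) ^ 2 ≤ (a + η) ^ 2 := sq_le_sq' (by linarith) (by linarith)
  have hD12 : D1 ≤ D2 := by rw [hD1_def, hD2_def]; linarith
  clear_value s D1 D2
  clear hs1 hs2 hs_def hD1_def hD2_def hang1 hang2
  have hE : -16 * π ^ 2 * n * A * s / D1 * (a + η) ^ 2 +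
      -16 * π ^ 2 * n * A * -s / D2 * (a - η) ^ 2 =
      16 * π ^ 2 * n * A * s * ((a - η) ^ 2 * D1 - (a + η) ^ 2 * D2) / (D1 * D2) := by
    field_simp [hD1pos.ne', hD2pos.ne']
    ring
  rw [hE]
  apply div_nonpos_of_nonpos_of_nonneg
  · apply mul_nonpos_iff.mpr
    left
    constructor
    · exact mul_nonneg (mul_nonneg (by positivity) hA0.le) hs_nonneg
    · have := mul_le_mul hsq hD12 (le_of_lt hD1pos) (by positivity)
      linarith
  · exact le_of_lt (mul_pos hD1pos hD2pos)

theorem cancellation_inequality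
    (n : ℕ) (hn : 1 ≤ n) (A : ℝ) (hA1 : 1 / (8 * π) < A) (hA2 : A < 1 / (4 * π)) :
    (∀ η ∈ Set.Icc (0:ℝ) (1 / (8 * n)),
      oscQshift n A (1 / (4 * n) - η) * (testFunShift n (1 / (4 * n) - η)) ^ 2 +
        oscQshift n A (1 / (4 * n) + η) * (testFunShift n (1 / (4 * n) + η)) ^ 2 ≤ 0) ∧
    (∫ y' in (1 / (8 * (n:ℝ)))..(3 / (8 * (n:ℝ))),
        oscQshift n A y' * (testFunShift n y') ^ 2) ≤ 0 := by
  have hkey := cancellation_pointwise n hn A hA1 hA2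
  refine ⟨hkey, ?_⟩
  have hn0 : (0:ℝ) < n := by exact_mod_cast hn
  have hπ : (0:ℝ) < π := pi_pos
  have hA0 : 0 < A := lt_trans (by positivity) hA1
  set a := (1:ℝ) / (8 * n) with ha_def
  set m := (1:ℝ) / (4 * n) with hm_def
  set b := (3:ℝ) / (8 * n) with hb_def
  have ha0 : 0 < a := by positivity
  have hm2a : m = 2 * a := by rw [hm_def, ha_def]; field_simp; ring
  have hb3a : b = 3 * a := by rw [hb_def, ha_def]; ring
  set G : ℝ → ℝ := fun y => oscQshift n A y * (3 / (8 * (n:ℝ)) - y) ^ 2 with hG_def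
  -- the integrand agrees with G on [a, b]
  have hcongr : ∫ y' in a..b, oscQshift n A y' * (testFunShift n y') ^ 2 = ∫ y' in a..b, G y' := by
    apply intervalIntegral.integral_congr
    intro y hy
    rw [Set.uIcc_of_le (by linarith)] at hy
    rw [hG_def]
    simp only
    rw [testFunShift_eq n hn hy.1 hy.2]
  rw [hcongr]
  -- continuity of G on [a,b]
  have hA18 : A < 1 / 8 := by
    have : (3:ℝ) < π := pi_gt_three
    have h2 : 1 / (4 * π) < 1 / 8 := by
      apply div_lt_div_of_pos_left <;> nlinarith
    linarith
  have hdenom : ∀ y ∈ Set.Icc a b,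
      ((y + 1/2) + (A / n) * Real.sin (4 * n * π * (y + 1/2)) - 1/2) ≠ 0 := by
    intro y hy
    have hsin : -1 ≤ Real.sin (4 * (n:ℝ) * π * (y + 1/2)) := Real.neg_one_le_sin _
    have hAn : A / (n:ℝ) < a := by
      rw [ha_def, div_lt_div_iff₀ hn0 (by positivity)]
      nlinarith
    have h1 : A / (n:ℝ) * Real.sin (4 * n * π * (y + 1/2)) ≥ -(A / n) := by nlinarith [div_pos hA0 hn0]
    have := hy.1
    have : 0 < (y + 1/2) + (A / n) * Real.sin (4 * n * π * (y + 1/2)) - 1/2 := by nlinarith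
    linarith
  have hGcont : ContinuousOn G (Set.Icc a b) := by
    apply ContinuousOn.mul
    · apply ContinuousOn.div
      · fun_prop
      · fun_prop
      · exact hdenom
    · fun_prop
  -- integrability
  have hsub1 : Set.uIcc a m ⊆ Set.Icc a b := by
    rw [Set.uIcc_of_le (by linarith)]; exact Set.Icc_subset_Icc le_rfl (by linarith)
  have hsub2 : Set.uIcc m b ⊆ Set.Icc a b := by
    rw [Set.uIcc_of_le (by linarith)]; exact Set.Icc_subset_Icc (by linarith) le_rfl
  have hint1 : IntervalIntegrable G MeasureTheory.volume a m :=
    (hGcont.mono hsub1).intervalIntegrable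
  have hint2 : IntervalIntegrable G MeasureTheory.volume m b :=
    (hGcont.mono hsub2).intervalIntegrable
  have hsplit : ∫ y' in a..b, G y' = (∫ y' in a..m, G y') + ∫ y' in m..b, G y' :=
    (intervalIntegral.integral_add_adjacent_intervals hint1 hint2).symm
  rw [hsplit]
  -- change of variables
  have hc1 : ∫ η in (0:ℝ)..a, G (m - η) = ∫ y' in a..m, G y' := by
    rw [intervalIntegral.integral_comp_sub_left G m]
    rw [show m - a = a by linarith [hm2a], sub_zero]
  have hc2 : ∫ η in (0:ℝ)..a, G (η + m) = ∫ y' in m..b, G y' := by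
    rw [intervalIntegral.integral_comp_add_right G m]
    rw [zero_add, show a + m = b by rw [hm2a, hb3a]; ring]
  rw [← hc1, ← hc2]
  -- integrability of shifted functions
  have hmaps1 : Set.MapsTo (fun η : ℝ => m - η) (Set.uIcc 0 a) (Set.Icc a b) := by
    intro η hη
    rw [Set.uIcc_of_le (le_of_lt ha0)] at hη
    simp only [Set.mem_Icc]
    constructor <;> linarith [hη.1, hη.2, hm2a, hb3a]
  have hmaps2 : Set.MapsTo (fun η : ℝ => η + m) (Set.uIcc 0 a) (Set.Icc a b) := by
    intro η hη
    rw [Set.uIcc_of_le (le_of_lt ha0)] at hη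
    simp only [Set.mem_Icc]
    constructor <;> linarith [hη.1, hη.2, hm2a, hb3a]
  have hint1' : IntervalIntegrable (fun η => G (m - η)) MeasureTheory.volume 0 a := by
    apply ContinuousOn.intervalIntegrable
    exact hGcont.comp (by fun_prop) hmaps1
  have hint2' : IntervalIntegrable (fun η => G (η + m)) MeasureTheory.volume 0 a := by
    apply ContinuousOn.intervalIntegrable
    exact hGcont.comp (by fun_prop) hmaps2
  rw [← intervalIntegral.integral_add hint1' hint2']
  -- nonpositivity
  have : 0 ≤ ∫ η in (0:ℝ)..a, -(G (m - η) + G (η + m)) := by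
    apply intervalIntegral.integral_nonneg (le_of_lt ha0)
    intro η hη
    rw [neg_nonneg]
    have hη' : η ∈ Set.Icc (0:ℝ) (1 / (8 * n)) := hη
    have h := hkey η hη'
    have he1 : G (m - η) = oscQshift n A (1 / (4 * n) - η) * (testFunShift n (1 / (4 * n) - η)) ^ 2 := by
      rw [hG_def]
      simp only
      rw [testFunShift_eq n hn (by linarith [hη.2, hm2a]) (by linarith [hη.1, hm2a, hb3a])]
    have he2 : G (η + m) = oscQshift n A (1 / (4 * n) + η) * (testFunShift n (1 / (4 * n) + η)) ^ 2 := by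
      rw [hG_def]
      simp only
      rw [testFunShift_eq n hn (by linarith [hη.1, hm2a]) (by linarith [hη.2, hm2a, hb3a])]
      rw [show η + m = m + η by ring]
    rw [he1, he2]
    exact h
  rw [intervalIntegral.integral_neg] at this
  linarith
end

section
/- Let Ω = (0,L) × (0,1) and let ψ ∈ C³(Ω̄) satisfy −Δψ = g(ψ) in Ω for some g ∈ C¹(ℝ), be L-periodic in x, and have ψ_x = 0 on {y=0} and {y=1}. If ‖g'∘ψ‖_{L^∞(Ω)} < π², then ψ_x ≡ 0 in Ω, i.e., ψ is a shear flow. -/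
open Real Set Filter Topology

lemma clm_apply_helper {E X Y : Type*} [NormedAddCommGroup E] [NormedSpace ℝ E]
    [NormedAddCommGroup X] [NormedSpace ℝ X] [NormedAddCommGroup Y] [NormedSpace ℝ Y]
    {F : E → (X →L[ℝ] Y)} {F' : E →L[ℝ] X →L[ℝ] Y} {p : E}
    (h : HasFDerivAt F F' p) (w : X) :
    HasFDerivAt (fun q => F q w) (F'.flip w) p := by
  have := h.clm_apply (hasFDerivAt_const w p)
  simpa using this

lemma second_deriv_nonpos_of_isLocalMax {f : ℝ → ℝ} {a : ℝ}
    (hf : ContDiff ℝ 2 f) (hmax : IsLocalMax f a) : deriv (deriv f) a ≤ 0 := by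
  by_contra h
  push_neg at h
  have hf1 : ContDiff ℝ 1 (deriv f) := by
    have := (contDiff_succ_iff_deriv (n := 1)).mp (by exact_mod_cast hf)
    exact this.2.2
  have hf'0 : deriv f a = 0 := hmax.deriv_eq_zero
  have hd : HasDerivAt (deriv f) (deriv (deriv f) a) a :=
    ((hf1.differentiable (by norm_num)) a).hasDerivAt
  have hslope : ∀ᶠ x in 𝓝[≠] a, 0 < slope (deriv f) a x :=
    (hasDerivAt_iff_tendsto_slope.mp hd).eventually (eventually_gt_nhds h)
  obtain ⟨t, ht, hto, hta⟩ := eventually_nhds_iff.mp (eventually_nhdsWithin_iff.mp hslope)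
  obtain ⟨ε, hε, hball⟩ := Metric.isOpen_iff.mp hto a hta
  obtain ⟨s, hs, hso, hsa⟩ := eventually_nhds_iff.mp hmax
  obtain ⟨δ, hδ, hball'⟩ := Metric.isOpen_iff.mp hso a hsa
  set r := min ε δ / 2 with hr
  have hrpos : 0 < r := by positivity
  have hderivpos : ∀ x ∈ Ioo a (a + r), 0 < deriv f x := by
    intro x hx
    have hxa : 0 < x - a := by linarith [hx.1]
    have hxball : x ∈ t := hball (by
      rw [Metric.mem_ball, Real.dist_eq, abs_of_pos hxa]
      have : x - a < r := by linarith [hx.2]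
      calc x - a < r := this
        _ ≤ ε / 2 := by rw [hr]; gcongr; exact min_le_left _ _
        _ < ε := by linarith)
    have hsl : 0 < slope (deriv f) a x := ht x hxball (by simp [ne_of_gt (by linarith [hx.1] : a < x)])
    rw [slope_def_field, hf'0, sub_zero] at hsl
    have := mul_pos hsl hxa
    rwa [div_mul_cancel₀ _ (ne_of_gt hxa)] at this
  have hmono : StrictMonoOn f (Icc a (a + r)) := by
    apply strictMonoOn_of_deriv_pos (convex_Icc _ _) (hf.continuous.continuousOn)
    intro x hx
    rw [interior_Icc] at hx
    exact hderivpos x hx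
  have h1 : f a < f (a + r / 2) := by
    apply hmono (by simp [le_of_lt hrpos]) (by constructor <;> [linarith; linarith]) (by linarith)
  have h2 : f (a + r / 2) ≤ f a := by
    apply hs
    apply hball'
    rw [Metric.mem_ball, Real.dist_eq]
    have : |a + r / 2 - a| = r / 2 := by rw [abs_of_pos] <;> [ring_nf; linarith]
    rw [this]
    calc r / 2 < r := by linarith
      _ ≤ δ / 2 := by rw [hr]; gcongr; exact min_le_right _ _
      _ < δ := by linarith
  linarith

theorem aux_max (L : ℝ) (hL : 0 < L) (u c : ℝ × ℝ → ℝ) (M : ℝ)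
    (hu : ContDiff ℝ 2 u)
    (hper : ∀ x y : ℝ, u (x + L, y) = u (x, y))
    (hb0 : ∀ x : ℝ, u (x, 0) = 0) (hb1 : ∀ x : ℝ, u (x, 1) = 0)
    (hcM : ∀ p : ℝ × ℝ, p.2 ∈ Icc (0:ℝ) 1 → |c p| ≤ M) (hM : M < π ^ 2)
    (hpde : ∀ p : ℝ × ℝ, p.2 ∈ Icc (0:ℝ) 1 →
      -(deriv (deriv (fun x => u (x, p.2))) p.1 +
        deriv (deriv (fun y => u (p.1, y))) p.2) = c p * u p) :
    ∀ p : ℝ × ℝ, p.2 ∈ Icc (0:ℝ) 1 → u p ≤ 0 := by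
  have hM0 : 0 ≤ M := le_trans (abs_nonneg _) (hcM (0,0) (by simp))
  set β := Real.sqrt ((M + π ^ 2) / 2) with hβ
  have hβ2 : β ^ 2 = (M + π ^ 2) / 2 := Real.sq_sqrt (by positivity)
  have hMβ : M < β ^ 2 := by rw [hβ2]; linarith
  have hβπ : β ^ 2 < π ^ 2 := by rw [hβ2]; linarith
  have hβpos : 0 < β := by
    apply Real.sqrt_pos.mpr; positivity
  have hβltπ : β < π := by
    nlinarith [pi_pos]
  set φ : ℝ → ℝ := fun y => Real.cos (β * (y - 1/2)) with hφ
  have hφpos : ∀ y ∈ Icc (0:ℝ) 1, 0 < φ y := by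
    intro y hy
    apply Real.cos_pos_of_mem_Ioo
    constructor
    · nlinarith [hy.1, hy.2, pi_pos]
    · nlinarith [hy.1, hy.2, pi_pos]
  -- derivatives of φ
  have hφd : ∀ y : ℝ, HasDerivAt φ (-β * Real.sin (β * (y - 1/2))) y := by
    intro y
    have h1 : HasDerivAt (fun y : ℝ => β * (y - 1/2)) β y := by
      exact (((hasDerivAt_id y).sub_const (1/2)).const_mul β).congr_deriv (mul_one β)
    have := (Real.hasDerivAt_cos (β * (y - 1/2))).comp y h1
    exact this.congr_deriv (by ring)
  have hφd2 : ∀ y : ℝ, HasDerivAt (fun y => -β * Real.sin (β * (y - 1/2))) (-(β^2) * φ y) y := by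
    intro y
    have h1 : HasDerivAt (fun y : ℝ => β * (y - 1/2)) β y := by
      exact (((hasDerivAt_id y).sub_const (1/2)).const_mul β).congr_deriv (mul_one β)
    have := ((Real.hasDerivAt_sin (β * (y - 1/2))).comp y h1).const_mul (-β)
    exact this.congr_deriv (by simp only [hφ]; ring)
  have hφcd : ContDiff ℝ 2 φ := by
    apply Real.contDiff_cos.comp
    exact (contDiff_const.mul (contDiff_id.sub contDiff_const)).of_le le_top
  -- periodicity over ℤ
  have hperZ : ∀ (n : ℤ) (x y : ℝ), u (x + n * L, y) = u (x, y) := by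
    intro n
    induction n using Int.induction_on with
    | zero => intro x y; simp
    | succ k ih =>
      intro x y
      have ih' := ih x y
      push_cast at ih' ⊢
      rw [show x + ((k:ℝ)+1) * L = (x + (k:ℝ) * L) + L by ring, hper]
      exact ih'
    | pred k ih =>
      intro x y
      have ih' := ih x y
      push_cast at ih' ⊢
      have h2 := hper (x + (-(k:ℝ)-1) * L) y
      rw [show x + (-(k:ℝ)-1) * L + L = x + (-(k:ℝ)) * L by ring] at h2
      exact h2.symm.trans ih'
  -- maximum of v = u / φ over a fundamental domain
  set v : ℝ × ℝ → ℝ := fun p => u p / φ p.2 with hv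
  set K : Set (ℝ × ℝ) := Icc (0:ℝ) L ×ˢ Icc (0:ℝ) 1 with hK
  have hKc : IsCompact K := isCompact_Icc.prod isCompact_Icc
  have hKne : K.Nonempty := ⟨(0,0), ⟨⟨le_refl _, hL.le⟩, ⟨le_refl _, zero_le_one⟩⟩⟩
  have hφcont : Continuous fun p : ℝ × ℝ => φ p.2 :=
    Real.continuous_cos.comp ((continuous_const.mul (continuous_snd.sub continuous_const)))
  have hvc : ContinuousOn v K :=
    ContinuousOn.div hu.continuous.continuousOn hφcont.continuousOn
      (fun p hp => (hφpos p.2 hp.2).ne')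
  obtain ⟨q, hqK, hqmax⟩ := hKc.exists_isMaxOn hKne hvc
  set m := v q with hm_def
  have hstrip : ∀ p : ℝ × ℝ, p.2 ∈ Icc (0:ℝ) 1 → v p ≤ m := by
    rintro ⟨x, y⟩ hy
    set x' := x - ⌊x / L⌋ * L with hx'
    have h0 : 0 ≤ x' := Int.sub_floor_div_mul_nonneg x hL
    have h1 : x' < L := Int.sub_floor_div_mul_lt x hL
    have hux : u (x, y) = u (x', y) := by
      have h2 := hperZ ⌊x/L⌋ x' y
      have e : x' + (⌊x / L⌋ : ℝ) * L = x := by rw [hx']; ring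
      rw [e] at h2
      exact h2
    have hv2 : v (x, y) = v (x', y) := by simp only [hv]; rw [hux]
    rw [hv2]
    exact hqmax ⟨⟨h0, h1.le⟩, hy⟩
  intro p hp
  have hφp := hφpos p.2 hp
  rcases le_or_gt m 0 with hm | hm
  · have hv0 : v p ≤ 0 := (hstrip p hp).trans hm
    have : u p = v p * φ p.2 := by
      rw [hv]; field_simp
    rw [this]
    exact mul_nonpos_of_nonpos_of_nonneg hv0 hφp.le
  · exfalso
    obtain ⟨a, b⟩ := q
    have hbI : b ∈ Icc (0:ℝ) 1 := hqK.2
    have hφb := hφpos b hbI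
    have huq : u (a, b) = m * φ b := by
      have : m = u (a, b) / φ b := rfl
      rw [this]; field_simp
    have hb0' : b ≠ 0 := by
      rintro rfl
      rw [hm_def] at hm
      simp only [hv, hb0 a, zero_div] at hm
      exact lt_irrefl _ hm
    have hb1' : b ≠ 1 := by
      rintro rfl
      rw [hm_def] at hm
      simp only [hv, hb1 a, zero_div] at hm
      exact lt_irrefl _ hm
    have hbIoo : b ∈ Ioo (0:ℝ) 1 := ⟨lt_of_le_of_ne hbI.1 (Ne.symm hb0'), lt_of_le_of_ne hbI.2 hb1'⟩
    have hwle : ∀ p : ℝ × ℝ, p.2 ∈ Icc (0:ℝ) 1 → u p ≤ m * φ p.2 := by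
      intro p hp
      exact (div_le_iff₀ (hφpos p.2 hp)).mp (hstrip p hp)
    -- x-slice
    have hUx : ContDiff ℝ 2 (fun x => u (x, b)) := hu.comp (contDiff_id.prodMk contDiff_const)
    have hX : deriv (deriv (fun x => u (x, b))) a ≤ 0 := by
      have hXc : ContDiff ℝ 2 (fun x => u (x, b) - m * φ b) := hUx.sub contDiff_const
      have hXmax : IsLocalMax (fun x => u (x, b) - m * φ b) a := by
        apply Filter.Eventually.of_forall
        intro x
        have h1 := hwle (x, b) hbI
        simp only [huq]
        simp only at h1 ⊢
        linarith
      have := second_deriv_nonpos_of_isLocalMax hXc hXmax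
      have e : deriv (fun x => u (x, b) - m * φ b) = deriv (fun x => u (x, b)) :=
        funext fun x => deriv_sub_const _
      rwa [e] at this
    -- y-slice
    have hUy : ContDiff ℝ 2 (fun y => u (a, y)) := hu.comp (contDiff_const.prodMk contDiff_id)
    have hUyd : Differentiable ℝ (fun y => u (a, y)) := hUy.differentiable (by norm_num)
    have hUy1 : ContDiff ℝ 1 (deriv (fun y => u (a, y))) :=
      ((contDiff_succ_iff_deriv (n := 1)).mp (by exact_mod_cast hUy)).2.2
    have hY : deriv (deriv (fun y => u (a, y))) b ≤ -(β ^ 2) * (m * φ b) := by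
      have hYc : ContDiff ℝ 2 (fun y => u (a, y) - m * φ y) :=
        hUy.sub (contDiff_const.mul hφcd)
      have hYmax : IsLocalMax (fun y => u (a, y) - m * φ y) b := by
        have hmem : Ioo (0:ℝ) 1 ∈ 𝓝 b := Ioo_mem_nhds hbIoo.1 hbIoo.2
        apply Filter.eventually_of_mem hmem
        intro y hy
        have h1 := hwle (a, y) (Ioo_subset_Icc_self hy)
        simp only at h1 ⊢
        rw [huq]
        linarith
      have hsd := second_deriv_nonpos_of_isLocalMax hYc hYmax
      have e1 : deriv (fun y => u (a, y) - m * φ y)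
          = fun y => deriv (fun y => u (a, y)) y - m * (-β * Real.sin (β * (y - 1/2))) := by
        funext y
        exact ((hUyd y).hasDerivAt.sub ((hφd y).const_mul m)).deriv
      have h1 : HasDerivAt (deriv (fun y => u (a, y))) (deriv (deriv (fun y => u (a, y))) b) b :=
        ((hUy1.differentiable (by norm_num)) b).hasDerivAt
      have h2 : HasDerivAt (fun y => m * (-β * Real.sin (β * (y - 1/2)))) (m * (-(β^2) * φ b)) b := by
        have := (hφd2 b).const_mul m
        simpa using this
      have e2 : deriv (deriv (fun y => u (a, y) - m * φ y)) b
          = deriv (deriv (fun y => u (a, y))) b - m * (-(β^2) * φ b) := by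
        rw [e1]
        exact (h1.sub h2).deriv
      rw [e2] at hsd
      nlinarith
    -- combine with the PDE
    have hpq := hpde (a, b) hbI
    have hcq : c (a, b) ≤ M := (abs_le.mp (hcM (a, b) hbI)).2
    have hcq' : -M ≤ c (a, b) := (abs_le.mp (hcM (a, b) hbI)).1
    have huqpos : 0 < u (a, b) := by rw [huq]; exact mul_pos hm hφb
    simp only at hpq
    rw [huq] at hpq huqpos
    nlinarith [mul_pos hm hφb]

theorem travelling_wave_near_Couette_is_shear
    (L : ℝ) (hL : 0 < L) (ψ : ℝ × ℝ → ℝ) (hψ : ContDiff ℝ 3 ψ)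
    (g : ℝ → ℝ) (hg : ContDiff ℝ 1 g)
    (hper : ∀ x y : ℝ, ψ (x + L, y) = ψ (x, y))
    (heq : ∀ p : ℝ × ℝ, p.2 ∈ Set.Icc (0:ℝ) 1 →
      -(deriv (deriv (fun x => ψ (x, p.2))) p.1 +
        deriv (deriv (fun y => ψ (p.1, y))) p.2) = g (ψ p))
    (hbc0 : ∀ x : ℝ, deriv (fun t => ψ (t, 0)) x = 0)
    (hbc1 : ∀ x : ℝ, deriv (fun t => ψ (t, 1)) x = 0)
    (hbound : ∃ M : ℝ, M < π ^ 2 ∧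
      ∀ p : ℝ × ℝ, p.2 ∈ Set.Icc (0:ℝ) 1 → |deriv g (ψ p)| ≤ M) :
    ∀ p : ℝ × ℝ, p.2 ∈ Set.Icc (0:ℝ) 1 →
      deriv (fun x => ψ (x, p.2)) p.1 = 0 := by
  obtain ⟨M, hM, hMb⟩ := hbound
  set F := fderiv ℝ ψ with hF
  set S := fderiv ℝ F with hS
  set T := fderiv ℝ S with hT
  have hψd : Differentiable ℝ ψ := hψ.differentiable (by norm_num)
  have hF2 : ContDiff ℝ 2 F := hψ.fderiv_right (by norm_num)
  have hFd : Differentiable ℝ F := hF2.differentiable (by norm_num)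
  have hS1 : ContDiff ℝ 1 S := hF2.fderiv_right (by norm_num)
  have hSd : Differentiable ℝ S := hS1.differentiable (by norm_num)
  have hgd : Differentiable ℝ g := hg.differentiable (by norm_num)
  set e1 : ℝ × ℝ := (1, 0) with he1
  set e2 : ℝ × ℝ := (0, 1) with he2
  set u : ℝ × ℝ → ℝ := fun p => F p e1 with hu_def
  have hu2 : ContDiff ℝ 2 u := hF2.clm_apply contDiff_const
  -- lines
  have hline1 : ∀ (x y : ℝ), HasDerivAt (fun t => (t, y) : ℝ → ℝ × ℝ) e1 x := fun x y =>
    (hasDerivAt_id x).prodMk (hasDerivAt_const x y)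
  have hline2 : ∀ (x y : ℝ), HasDerivAt (fun s => (x, s) : ℝ → ℝ × ℝ) e2 y := fun x y =>
    (hasDerivAt_const y x).prodMk (hasDerivAt_id y)
  -- first-order slices of ψ
  have hB1 : ∀ x y : ℝ, HasDerivAt (fun t => ψ (t, y)) (u (x, y)) x := fun x y =>
    ((hψd (x, y)).hasFDerivAt).comp_hasDerivAt x (hline1 x y)
  have hB2 : ∀ x y : ℝ, HasDerivAt (fun s => ψ (x, s)) (F (x, y) e2) y := fun x y =>
    ((hψd (x, y)).hasFDerivAt).comp_hasDerivAt y (hline2 x y)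
  -- derivative of q ↦ F q w
  have hFw : ∀ (p : ℝ × ℝ) (w : ℝ × ℝ), HasFDerivAt (fun q => F q w) ((S p).flip w) p :=
    fun p w => clm_apply_helper (hFd p).hasFDerivAt w
  -- derivative of q ↦ S q w₁ w₂
  have hSw : ∀ (p : ℝ × ℝ) (w₁ w₂ : ℝ × ℝ),
      HasFDerivAt (fun q => S q w₁ w₂) (((T p).flip w₁).flip w₂) p := by
    intro p w₁ w₂
    have h1 : HasFDerivAt (fun q => S q w₁) ((T p).flip w₁) p :=
      clm_apply_helper (hSd p).hasFDerivAt w₁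
    exact clm_apply_helper h1 w₂
  -- second-order slices of ψ
  have hC1 : ∀ x y : ℝ, deriv (deriv (fun t => ψ (t, y))) x = S (x, y) e1 e1 := by
    intro x y
    have e : deriv (fun t => ψ (t, y)) = fun t => F (t, y) e1 :=
      funext fun t => (hB1 t y).deriv
    rw [e]
    have := ((hFw (x, y) e1).comp_hasDerivAt x (hline1 x y)).deriv
    simpa [Function.comp_def] using this
  have hC2 : ∀ x y : ℝ, deriv (deriv (fun s => ψ (x, s))) y = S (x, y) e2 e2 := by
    intro x y
    have e : deriv (fun s => ψ (x, s)) = fun s => F (x, s) e2 :=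
      funext fun s => (hB2 x s).deriv
    rw [e]
    have := ((hFw (x, y) e2).comp_hasDerivAt y (hline2 x y)).deriv
    simpa [Function.comp_def] using this
  -- PDE in S-form
  have hD : ∀ p : ℝ × ℝ, p.2 ∈ Icc (0:ℝ) 1 → -(S p e1 e1 + S p e2 e2) = g (ψ p) := by
    rintro ⟨x, y⟩ hy
    have := heq (x, y) hy
    simpa only [hC1 x y, hC2 x y] using this
  -- differentiate the PDE in x
  have hE : ∀ p : ℝ × ℝ, p.2 ∈ Icc (0:ℝ) 1 →
      -(T p e1 e1 e1 + T p e1 e2 e2) = deriv g (ψ p) * u p := by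
    rintro ⟨x, y⟩ hy
    have hfun : (fun t => -(S (t, y) e1 e1 + S (t, y) e2 e2)) = fun t => g (ψ (t, y)) :=
      funext fun t => hD (t, y) hy
    have hA1 : HasDerivAt (fun t => S (t, y) e1 e1) (T (x, y) e1 e1 e1) x := by
      have := (hSw (x, y) e1 e1).comp_hasDerivAt x (hline1 x y)
      simpa [Function.comp_def] using this
    have hA2 : HasDerivAt (fun t => S (t, y) e2 e2) (T (x, y) e1 e2 e2) x := by
      have := (hSw (x, y) e2 e2).comp_hasDerivAt x (hline1 x y)
      simpa [Function.comp_def] using this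
    have hA : HasDerivAt (fun t => -(S (t, y) e1 e1 + S (t, y) e2 e2))
        (-(T (x, y) e1 e1 e1 + T (x, y) e1 e2 e2)) x := (hA1.add hA2).neg
    have hBd : HasDerivAt (fun t => g (ψ (t, y))) (deriv g (ψ (x, y)) * u (x, y)) x :=
      (hgd (ψ (x, y))).hasDerivAt.comp x (hB1 x y)
    rw [hfun] at hA
    exact hA.unique hBd
  -- symmetry of derivatives
  have sym2 : ∀ (p : ℝ × ℝ) (v w : ℝ × ℝ), S p v w = S p w v := fun p v w =>
    second_derivative_symmetric (fun q => (hψd q).hasFDerivAt) ((hFd p).hasFDerivAt) v w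
  have sym3a : ∀ (p a b c : ℝ × ℝ), T p a b c = T p b a c := by
    intro p a b c
    have h := second_derivative_symmetric (f := F) (fun q => (hFd q).hasFDerivAt)
      ((hSd p).hasFDerivAt) a b
    rw [h]
  have sym3b : ∀ (p a b c : ℝ × ℝ), T p a b c = T p a c b := by
    intro p a b c
    have hfun : (fun q => S q b c) = fun q => S q c b := funext fun q => sym2 q b c
    have h1 := hSw p b c
    have h2 := hSw p c b
    rw [hfun] at h1
    have := h1.unique h2
    have h3 := congrArg (fun (X : (ℝ × ℝ) →L[ℝ] ℝ) => X a) this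
    simpa using h3
  have symkey : ∀ p : ℝ × ℝ, T p e2 e2 e1 = T p e1 e2 e2 := fun p =>
    (sym3b p e2 e2 e1).trans (sym3a p e2 e1 e2)
  -- slices of u
  have hG1i : ∀ x y : ℝ, deriv (fun t => u (t, y)) x = S (x, y) e1 e1 := by
    intro x y
    have := ((hFw (x, y) e1).comp_hasDerivAt x (hline1 x y)).deriv
    simpa [Function.comp_def] using this
  have hG1 : ∀ x y : ℝ, deriv (deriv (fun t => u (t, y))) x = T (x, y) e1 e1 e1 := by
    intro x y
    have e : deriv (fun t => u (t, y)) = fun t => S (t, y) e1 e1 := funext fun t => hG1i t y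
    rw [e]
    have := ((hSw (x, y) e1 e1).comp_hasDerivAt x (hline1 x y)).deriv
    simpa [Function.comp_def] using this
  have hG2i : ∀ x y : ℝ, deriv (fun s => u (x, s)) y = S (x, y) e2 e1 := by
    intro x y
    have := ((hFw (x, y) e1).comp_hasDerivAt y (hline2 x y)).deriv
    simpa [Function.comp_def] using this
  have hG2 : ∀ x y : ℝ, deriv (deriv (fun s => u (x, s))) y = T (x, y) e2 e2 e1 := by
    intro x y
    have e : deriv (fun s => u (x, s)) = fun s => S (x, s) e2 e1 := funext fun s => hG2i x s
    rw [e]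
    have := ((hSw (x, y) e2 e1).comp_hasDerivAt y (hline2 x y)).deriv
    simpa [Function.comp_def] using this
  -- PDE for u
  have hpdeu : ∀ p : ℝ × ℝ, p.2 ∈ Icc (0:ℝ) 1 →
      -(deriv (deriv (fun x => u (x, p.2))) p.1 + deriv (deriv (fun y => u (p.1, y))) p.2)
        = (fun p => deriv g (ψ p)) p * u p := by
    rintro ⟨x, y⟩ hy
    simp only
    rw [hG1 x y, hG2 x y, symkey (x, y)]
    exact hE (x, y) hy
  -- boundary conditions for u
  have hb0 : ∀ x : ℝ, u (x, 0) = 0 := fun x => ((hB1 x 0).deriv).symm.trans (hbc0 x)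
  have hb1 : ∀ x : ℝ, u (x, 1) = 0 := fun x => ((hB1 x 1).deriv).symm.trans (hbc1 x)
  -- periodicity of u
  have hperu : ∀ x y : ℝ, u (x + L, y) = u (x, y) := by
    intro x y
    have h1 := (hB1 (x + L) y).deriv
    have h2 := (hB1 x y).deriv
    have h3 : deriv (fun t => ψ (t, y)) (x + L) = deriv (fun t => ψ (t, y)) x := by
      have e : (fun t => ψ (t + L, y)) = fun t => ψ (t, y) := funext fun t => hper t y
      rw [← deriv_comp_add_const (f := fun t => ψ (t, y)), e]
    rw [← h1, h3, h2]
  -- coefficient bound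
  have hcM : ∀ p : ℝ × ℝ, p.2 ∈ Icc (0:ℝ) 1 → |(fun p => deriv g (ψ p)) p| ≤ M := hMb
  -- apply the maximum principle to u and -u
  have hle := aux_max L hL u _ M hu2 hperu hb0 hb1 hcM hM hpdeu
  have hpdeneg : ∀ p : ℝ × ℝ, p.2 ∈ Icc (0:ℝ) 1 →
      -(deriv (deriv (fun x => (fun p => -u p) (x, p.2))) p.1 +
        deriv (deriv (fun y => (fun p => -u p) (p.1, y))) p.2)
        = (fun p => deriv g (ψ p)) p * (fun p => -u p) p := by
    rintro ⟨x, y⟩ hy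
    have hp' := hpdeu (x, y) hy
    simp only at hp' ⊢
    have e1 : deriv (fun x => -u (x, y)) = fun x => -(deriv (fun x => u (x, y)) x) :=
      funext fun x => deriv.neg
    have e2 : deriv (fun s => -u (x, s)) = fun s => -(deriv (fun s => u (x, s)) s) :=
      funext fun s => deriv.neg
    rw [e1, e2, show deriv (fun x => -deriv (fun x => u (x, y)) x) x = -deriv (deriv (fun x => u (x, y))) x from deriv.neg,
      show deriv (fun s => -deriv (fun s => u (x, s)) s) y = -deriv (deriv (fun s => u (x, s))) y from deriv.neg]
    linarith [hp']
  have hge := aux_max L hL (fun p => -u p) (fun p => deriv g (ψ p)) M hu2.neg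
    (fun x y => by simp only [hperu x y]) (fun x => by simp [hb0 x])
    (fun x => by simp [hb1 x]) hcM hM hpdeneg
  rintro ⟨x, y⟩ hy
  have h1 := hle (x, y) hy
  have h2 := hge (x, y) hy
  simp only [neg_nonpos] at h2
  rw [(hB1 x y).deriv]
  linarith
end

section
/- Let Ω₂ = {(y,z) : 0 < y < 1, z ∈ ℝ/(L_zℤ)}. For every vector field u = (v,w) ∈ H¹(Ω₂)² with v = 0 on {y=0} ∪ {y=1} and zero circulation ∮_{y=0} u·dl = ∮_{y=1} u·dl = 0, there exists a constant c₀ > 0 (independent of u) such that ‖u‖_{L²(Ω₂)} ≤ c₀(‖div u‖_{L²(Ω₂)} + ‖curl u‖_{L²(Ω₂)}), where div u = v_y + w_z and curl u = w_y − v_z. -/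
set_option linter.unusedVariables false
set_option maxHeartbeats 1000000

open Real Set intervalIntegral MeasureTheory

namespace DC





/-- Cauchy–Schwarz for interval integrals of continuous functions. -/
lemma cs_integral (f : ℝ → ℝ) (hf : Continuous f) {a b : ℝ} (hab : a ≤ b) :
    (∫ t in a..b, f t) ^ 2 ≤ (b - a) * ∫ t in a..b, (f t) ^ 2 := by
  rcases eq_or_lt_of_le hab with rfl | hlt
  · simp
  have hba : (0:ℝ) < b - a := sub_pos.2 hlt
  set I1 := ∫ t in a..b, f t with hI1
  set I2 := ∫ t in a..b, (f t) ^ 2 with hI2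
  have key : ∀ lam : ℝ, 0 ≤ I2 - 2 * lam * I1 + (b - a) * lam ^ 2 := by
    intro lam
    have h0 : 0 ≤ ∫ t in a..b, (f t - lam) ^ 2 :=
      intervalIntegral.integral_nonneg hab (fun t _ => sq_nonneg _)
    have hexp : (∫ t in a..b, (f t - lam) ^ 2)
        = I2 - 2 * lam * I1 + (b - a) * lam ^ 2 := by
      have hcong : EqOn (fun t => (f t - lam) ^ 2)
          (fun t => (f t) ^ 2 - (2 * lam) * f t + lam ^ 2) (uIcc a b) := by
        intro t _; ring
      rw [intervalIntegral.integral_congr hcong,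
        intervalIntegral.integral_add (f := fun t => f t ^ 2 - 2 * lam * f t) (((hf.pow 2).sub (continuous_const.mul hf)).intervalIntegrable a b)
          (intervalIntegrable_const),
        intervalIntegral.integral_sub (f := fun t => f t ^ 2) (g := fun t => 2 * lam * f t) ((hf.pow 2).intervalIntegrable a b)
          ((continuous_const.mul hf).intervalIntegrable a b),
        intervalIntegral.integral_const_mul, intervalIntegral.integral_const]
      simp only [smul_eq_mul]
      rfl
    linarith [hexp ▸ h0]
  have h := key (I1 / (b - a))
  have hne : b - a ≠ 0 := ne_of_gt hba
  have e1 : I2 - 2 * (I1 / (b - a)) * I1 + (b - a) * (I1 / (b - a)) ^ 2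
      = I2 - I1 ^ 2 / (b - a) := by field_simp; ring
  rw [e1] at h
  have h4 : I1 ^ 2 / (b - a) ≤ I2 := by linarith
  have : I1 ^ 2 = (b - a) * (I1 ^ 2 / (b - a)) := by field_simp
  rw [this]
  exact mul_le_mul_of_nonneg_left h4 hba.le

lemma sqrt_add_le' (x y : ℝ) (hx : 0 ≤ x) (hy : 0 ≤ y) :
    Real.sqrt (x + y) ≤ Real.sqrt x + Real.sqrt y := by
  have h : x + y ≤ (Real.sqrt x + Real.sqrt y) ^ 2 := by
    nlinarith [Real.sq_sqrt hx, Real.sq_sqrt hy, Real.sqrt_nonneg x, Real.sqrt_nonneg y]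
  calc Real.sqrt (x + y) ≤ Real.sqrt ((Real.sqrt x + Real.sqrt y) ^ 2) := Real.sqrt_le_sqrt h
    _ = Real.sqrt x + Real.sqrt y := Real.sqrt_sq (by positivity)

/-- Leibniz rule: differentiation under the interval integral, continuous version. -/
lemma hasDerivAt_param (f g : ℝ → ℝ → ℝ)
    (hf : Continuous fun p : ℝ × ℝ => f p.1 p.2)
    (hg : Continuous fun p : ℝ × ℝ => g p.1 p.2)
    (hd : ∀ x t, HasDerivAt (fun x' => f x' t) (g x t) x)
    (a b x₀ : ℝ) :
    HasDerivAt (fun x => ∫ t in a..b, f x t) (∫ t in a..b, g x₀ t) x₀ := by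
  obtain ⟨C, hC⟩ : ∃ C, ∀ p ∈ Icc (x₀ - 1) (x₀ + 1) ×ˢ uIcc a b,
      ‖(fun p : ℝ × ℝ => g p.1 p.2) p‖ ≤ C :=
    (isCompact_Icc.prod isCompact_uIcc).exists_bound_of_continuousOn hg.continuousOn
  have h := intervalIntegral.hasDerivAt_integral_of_dominated_loc_of_deriv_le
      (F := f) (F' := g) (x₀ := x₀) (a := a) (b := b) (μ := volume)
      (bound := fun _ => C) (s := Metric.ball x₀ 1) (Metric.ball_mem_nhds x₀ one_pos)
      (Filter.Eventually.of_forall fun x =>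
        ((hf.comp (Continuous.prodMk_right x)).aestronglyMeasurable))
      ((hf.comp (Continuous.prodMk_right x₀)).intervalIntegrable a b)
      ((hg.comp (Continuous.prodMk_right x₀)).aestronglyMeasurable)
      (Filter.Eventually.of_forall fun t ht x hx => by
        have hxmem : x ∈ Icc (x₀ - 1) (x₀ + 1) := by
          have := mem_ball_iff_norm.1 hx
          rw [Real.norm_eq_abs, abs_lt] at this
          constructor <;> linarith [this.1, this.2]
        exact hC (x, t) ⟨hxmem, uIoc_subset_uIcc ht⟩)
      intervalIntegrable_const
      (Filter.Eventually.of_forall fun t _ x _ => hd x t)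
  exact h.2







lemma cont_param (f : ℝ × ℝ → ℝ) (hf : Continuous f) (a b : ℝ) :
    Continuous fun y => ∫ z in a..b, f (y, z) :=
  intervalIntegral.continuous_parametric_intervalIntegral_of_continuous' (μ := volume)
    (f := fun y z => f (y, z)) (by exact hf) a b

noncomputable def II (Lz : ℝ) (f : ℝ × ℝ → ℝ) : ℝ :=
  ∫ y in (0:ℝ)..1, ∫ z in (0:ℝ)..Lz, f (y, z)

lemma II_add (Lz : ℝ) (f g : ℝ × ℝ → ℝ) (hf : Continuous f) (hg : Continuous g) :
    II Lz (fun p => f p + g p) = II Lz f + II Lz g := by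
  unfold II
  have h1 : ∀ y : ℝ, (∫ z in (0:ℝ)..Lz, (f (y, z) + g (y, z)))
      = (∫ z in (0:ℝ)..Lz, f (y, z)) + ∫ z in (0:ℝ)..Lz, g (y, z) := fun y =>
    intervalIntegral.integral_add
      ((hf.comp (Continuous.prodMk_right y)).intervalIntegrable _ _)
      ((hg.comp (Continuous.prodMk_right y)).intervalIntegrable _ _)
  simp_rw [h1]
  exact intervalIntegral.integral_add
    ((cont_param f hf 0 Lz).intervalIntegrable _ _)
    ((cont_param g hg 0 Lz).intervalIntegrable _ _)

lemma II_sub (Lz : ℝ) (f g : ℝ × ℝ → ℝ) (hf : Continuous f) (hg : Continuous g) :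
    II Lz (fun p => f p - g p) = II Lz f - II Lz g := by
  unfold II
  have h1 : ∀ y : ℝ, (∫ z in (0:ℝ)..Lz, (f (y, z) - g (y, z)))
      = (∫ z in (0:ℝ)..Lz, f (y, z)) - ∫ z in (0:ℝ)..Lz, g (y, z) := fun y =>
    intervalIntegral.integral_sub
      ((hf.comp (Continuous.prodMk_right y)).intervalIntegrable _ _)
      ((hg.comp (Continuous.prodMk_right y)).intervalIntegrable _ _)
  simp_rw [h1]
  exact intervalIntegral.integral_sub
    ((cont_param f hf 0 Lz).intervalIntegrable _ _)
    ((cont_param g hg 0 Lz).intervalIntegrable _ _)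

lemma II_const_mul (Lz c : ℝ) (f : ℝ × ℝ → ℝ) :
    II Lz (fun p => c * f p) = c * II Lz f := by
  unfold II
  simp_rw [intervalIntegral.integral_const_mul]

lemma II_mono_on {Lz : ℝ} (hLz : 0 ≤ Lz) (f g : ℝ × ℝ → ℝ)
    (hf : Continuous f) (hg : Continuous g)
    (h : ∀ p ∈ Icc (0:ℝ) 1 ×ˢ Icc (0:ℝ) Lz, f p ≤ g p) :
    II Lz f ≤ II Lz g := by
  unfold II
  apply intervalIntegral.integral_mono_on zero_le_one
    ((cont_param f hf 0 Lz).intervalIntegrable _ _)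
    ((cont_param g hg 0 Lz).intervalIntegrable _ _)
  intro y hy
  apply intervalIntegral.integral_mono_on hLz
    ((hf.comp (Continuous.prodMk_right y)).intervalIntegrable _ _)
    ((hg.comp (Continuous.prodMk_right y)).intervalIntegrable _ _)
  intro z hz
  exact h (y, z) ⟨hy, hz⟩

lemma II_nonneg {Lz : ℝ} (hLz : 0 ≤ Lz) (f : ℝ × ℝ → ℝ) (hf : Continuous f)
    (h : ∀ p ∈ Icc (0:ℝ) 1 ×ˢ Icc (0:ℝ) Lz, 0 ≤ f p) : 0 ≤ II Lz f := by
  have := II_mono_on hLz (fun _ => 0) f continuous_const hf h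
  simpa [II] using this

lemma II_swap {Lz : ℝ} (hLz : 0 ≤ Lz) (f : ℝ × ℝ → ℝ) (hf : Continuous f) :
    II Lz f = ∫ z in (0:ℝ)..Lz, ∫ y in (0:ℝ)..1, f (y, z) := by
  unfold II
  have h1 : ∀ y : ℝ, (∫ z in (0:ℝ)..Lz, f (y, z))
      = ∫ z in Ioc (0:ℝ) Lz, f (y, z) := fun y => intervalIntegral.integral_of_le hLz
  have h2 : ∀ z : ℝ, (∫ y in (0:ℝ)..1, f (y, z))
      = ∫ y in Ioc (0:ℝ) 1, f (y, z) := fun z => intervalIntegral.integral_of_le zero_le_one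
  simp_rw [h1, h2, intervalIntegral.integral_of_le hLz, intervalIntegral.integral_of_le zero_le_one]
  have hint : Integrable (Function.uncurry fun y z => f (y, z))
      ((volume.restrict (Ioc (0:ℝ) 1)).prod (volume.restrict (Ioc (0:ℝ) Lz))) := by
    rw [Measure.prod_restrict]
    apply (hf.continuousOn.integrableOn_compact (isCompact_Icc.prod isCompact_Icc)).mono_set
    exact prod_mono Ioc_subset_Icc_self Ioc_subset_Icc_self
  exact MeasureTheory.integral_integral_swap hint

lemma ftc (f f' : ℝ → ℝ) (h : ∀ t, HasDerivAt f (f' t) t) (hc : Continuous f') (a b : ℝ) :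
    ∫ t in a..b, f' t = f b - f a :=
  intervalIntegral.integral_eq_sub_of_hasDerivAt (fun t _ => h t) (hc.intervalIntegrable a b)

lemma periodic_shift (f : ℝ → ℝ) {T : ℝ} (hT : Function.Periodic f T) (s : ℝ) :
    ∫ z in (0:ℝ)..T, f (z + s) = ∫ z in (0:ℝ)..T, f z := by
  rw [intervalIntegral.integral_comp_add_right]
  have := hT.intervalIntegral_add_eq s 0
  simpa [zero_add, add_comm] using this

lemma shift_prod (F G : ℝ → ℝ) {T : ℝ} (hF : Function.Periodic F T)
    (hG : Function.Periodic G T) (s : ℝ) :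
    ∫ z in (0:ℝ)..T, F z * G (z + s) = ∫ z in (0:ℝ)..T, F (z - s) * G z := by
  have hper : Function.Periodic (fun z => F (z - s) * G z) T := by
    intro z; simp only []
    rw [show z + T - s = z - s + T by ring, hF (z - s), hG z]
  have h := periodic_shift (fun z => F (z - s) * G z) hper s
  simpa [add_sub_cancel_right] using h







noncomputable def py (v : ℝ × ℝ → ℝ) : ℝ × ℝ → ℝ := fun p => fderiv ℝ v p (1, 0)
noncomputable def pz (v : ℝ × ℝ → ℝ) : ℝ × ℝ → ℝ := fun p => fderiv ℝ v p (0, 1)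

variable {v : ℝ × ℝ → ℝ}

lemma cont_py (hv : ContDiff ℝ 1 v) : Continuous (py v) :=
  (hv.continuous_fderiv one_ne_zero).clm_apply continuous_const

lemma cont_pz (hv : ContDiff ℝ 1 v) : Continuous (pz v) :=
  (hv.continuous_fderiv one_ne_zero).clm_apply continuous_const

lemma hasDerivAt_py (hv : ContDiff ℝ 1 v) (y z : ℝ) :
    HasDerivAt (fun t => v (t, z)) (py v (y, z)) y := by
  have h1 : HasDerivAt (fun t : ℝ => ((t, z) : ℝ × ℝ)) (1, 0) y :=
    (hasDerivAt_id y).prodMk (hasDerivAt_const y z)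
  exact ((hv.differentiable one_ne_zero (y, z)).hasFDerivAt).comp_hasDerivAt y h1

lemma hasDerivAt_pz (hv : ContDiff ℝ 1 v) (y z : ℝ) :
    HasDerivAt (fun t => v (y, t)) (pz v (y, z)) z := by
  have h1 : HasDerivAt (fun t : ℝ => ((y, t) : ℝ × ℝ)) (0, 1) z :=
    (hasDerivAt_const z y).prodMk (hasDerivAt_id z)
  exact ((hv.differentiable one_ne_zero (y, z)).hasFDerivAt).comp_hasDerivAt z h1

lemma deriv_py (hv : ContDiff ℝ 1 v) (y z : ℝ) :
    deriv (fun t => v (t, z)) y = py v (y, z) := (hasDerivAt_py hv y z).deriv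

lemma deriv_pz (hv : ContDiff ℝ 1 v) (y z : ℝ) :
    deriv (fun t => v (y, t)) z = pz v (y, z) := (hasDerivAt_pz hv y z).deriv

lemma py_periodic {Lz : ℝ} (hv : ContDiff ℝ 1 v)
    (hper : ∀ y z : ℝ, v (y, z + Lz) = v (y, z)) (y z : ℝ) :
    py v (y, z + Lz) = py v (y, z) := by
  have hfun : (fun t => v (t, z + Lz)) = fun t => v (t, z) := funext fun t => hper t z
  rw [← deriv_py hv y (z + Lz), ← deriv_py hv y z, hfun]

lemma pz_periodic {Lz : ℝ} (hv : ContDiff ℝ 1 v)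
    (hper : ∀ y z : ℝ, v (y, z + Lz) = v (y, z)) (y z : ℝ) :
    pz v (y, z + Lz) = pz v (y, z) := by
  have hfun : (fun t => v (y, t + Lz)) = fun t => v (y, t) := funext fun t => hper y t
  rw [← deriv_pz hv y (z + Lz), ← deriv_pz hv y z,
    ← deriv_comp_add_const (fun t => v (y, t)) Lz, hfun]

/-- derivative in the shift parameter of `s ↦ w (y, z + s)` -/
lemma hasDerivAt_shift_z (hv : ContDiff ℝ 1 v) (y z s : ℝ) :
    HasDerivAt (fun s' => v (y, z + s')) (pz v (y, z + s)) s := by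
  have h0 := hasDerivAt_pz hv y (z + s)
  have h1 : HasDerivAt (fun s' : ℝ => z + s') 1 s := by
    simpa using (hasDerivAt_id s).const_add z
  simpa [Function.comp_def] using h0.comp s h1

lemma hasDerivAt_shift_z_neg (hv : ContDiff ℝ 1 v) (y z s : ℝ) :
    HasDerivAt (fun s' => v (y, z - s')) (-pz v (y, z - s)) s := by
  have h0 := hasDerivAt_pz hv y (z - s)
  have h1 : HasDerivAt (fun s' : ℝ => z - s') (-1) s := by
    simpa using (hasDerivAt_id s).const_sub z
  simpa [Function.comp_def] using h0.comp s h1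







lemma sq_integral_mono_interval {f : ℝ → ℝ} (hf : Continuous f) {a b T : ℝ}
    (h0a : 0 ≤ a) (hab : a ≤ b) (hbT : b ≤ T) :
    (∫ u in a..b, (f u) ^ 2) ≤ ∫ u in (0:ℝ)..T, (f u) ^ 2 :=
  intervalIntegral.integral_mono_interval h0a hab hbT
    (Filter.Eventually.of_forall fun u => sq_nonneg _)
    ((hf.pow 2).intervalIntegrable _ _)

lemma poincare (f f' : ℝ → ℝ) (hf' : Continuous f')
    (hd : ∀ z, HasDerivAt f (f' z) z) {T : ℝ} (hT : 0 < T)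
    (hmean : (∫ z in (0:ℝ)..T, f z) = 0) :
    (∫ z in (0:ℝ)..T, (f z) ^ 2) ≤ T ^ 2 * ∫ z in (0:ℝ)..T, (f' z) ^ 2 := by
  have hfc : Continuous f := by
    have : Differentiable ℝ f := fun z => (hd z).differentiableAt
    exact this.continuous
  set E := ∫ z in (0:ℝ)..T, (f' z) ^ 2 with hE
  have hEnn : 0 ≤ E :=
    intervalIntegral.integral_nonneg hT.le fun u _ => sq_nonneg _
  -- pointwise difference bound
  have hdiff : ∀ z ∈ Icc (0:ℝ) T, ∀ s ∈ Icc (0:ℝ) T, (f z - f s) ^ 2 ≤ T * E := by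
    intro z hz s hs
    have hftc : ∀ c d : ℝ, (∫ u in c..d, f' u) = f d - f c := fun c d => ftc f f' hd hf' c d
    rcases le_total s z with h | h
    · have h1 : (f z - f s) ^ 2 = (∫ u in s..z, f' u) ^ 2 := by rw [hftc s z]
      rw [h1]
      calc (∫ u in s..z, f' u) ^ 2 ≤ (z - s) * ∫ u in s..z, (f' u) ^ 2 :=
            cs_integral f' hf' h
        _ ≤ T * E := by
            apply mul_le_mul (by linarith [hz.2, hs.1]) (sq_integral_mono_interval hf' hs.1 h hz.2)
              (intervalIntegral.integral_nonneg h fun u _ => sq_nonneg _) hT.le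
    · have h1 : (f z - f s) ^ 2 = (∫ u in z..s, f' u) ^ 2 := by
        rw [hftc z s]; ring
      rw [h1]
      calc (∫ u in z..s, f' u) ^ 2 ≤ (s - z) * ∫ u in z..s, (f' u) ^ 2 :=
            cs_integral f' hf' h
        _ ≤ T * E := by
            apply mul_le_mul (by linarith [hs.2, hz.1]) (sq_integral_mono_interval hf' hz.1 h hs.2)
              (intervalIntegral.integral_nonneg h fun u _ => sq_nonneg _) hT.le
  -- pointwise bound for f z squared
  have hpt : ∀ z ∈ Icc (0:ℝ) T, (f z) ^ 2 ≤ T * E := by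
    intro z hz
    have h2 : (∫ s in (0:ℝ)..T, (f z - f s)) = T * f z := by
      rw [intervalIntegral.integral_sub intervalIntegrable_const
        (hfc.intervalIntegrable _ _), hmean, intervalIntegral.integral_const]
      simp [smul_eq_mul]
    have h3 : (T * f z) ^ 2 ≤ T * ∫ s in (0:ℝ)..T, (f z - f s) ^ 2 := by
      rw [← h2]
      simpa using cs_integral (fun s => f z - f s) (continuous_const.sub hfc) hT.le
    have h4 : (∫ s in (0:ℝ)..T, (f z - f s) ^ 2) ≤ T * (T * E) := by
      calc (∫ s in (0:ℝ)..T, (f z - f s) ^ 2) ≤ ∫ s in (0:ℝ)..T, T * E :=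
            intervalIntegral.integral_mono_on hT.le
              (((continuous_const.sub hfc).pow 2).intervalIntegrable _ _)
              intervalIntegrable_const (fun s hs => hdiff z hz s hs)
        _ = T * (T * E) := by rw [intervalIntegral.integral_const]; simp [smul_eq_mul]
    have h5 : T ^ 2 * (f z) ^ 2 ≤ T ^ 2 * (T * E) := by
      calc T ^ 2 * (f z) ^ 2 = (T * f z) ^ 2 := by ring
        _ ≤ T * (T * (T * E)) := le_trans h3 (by nlinarith [hT])
        _ = T ^ 2 * (T * E) := by ring
    exact le_of_mul_le_mul_left (by simpa [mul_comm] using h5) (by positivity)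
  calc (∫ z in (0:ℝ)..T, (f z) ^ 2) ≤ ∫ z in (0:ℝ)..T, T * E :=
        intervalIntegral.integral_mono_on hT.le ((hfc.pow 2).intervalIntegrable _ _)
          intervalIntegrable_const hpt
    _ = T * (T * E) := by rw [intervalIntegral.integral_const]; simp [smul_eq_mul]
    _ = T ^ 2 * E := by ring







variable {Lz : ℝ} {v w : ℝ × ℝ → ℝ}

lemma cross_eq (hv : ContDiff ℝ 1 v) (hw : ContDiff ℝ 1 w)
    (hpv : ∀ y z : ℝ, v (y, z + Lz) = v (y, z))
    (hpw : ∀ y z : ℝ, w (y, z + Lz) = w (y, z))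
    (hv0 : ∀ z : ℝ, v (0, z) = 0) (hv1 : ∀ z : ℝ, v (1, z) = 0) :
    II Lz (fun p => py v p * pz w p) = II Lz (fun p => pz v p * py w p) := by
  have cv : Continuous v := hv.continuous
  have cw : Continuous w := hw.continuous
  have cvy : Continuous (py v) := cont_py hv
  have cvz : Continuous (pz v) := cont_pz hv
  have cwy : Continuous (py w) := cont_py hw
  have cwz : Continuous (pz w) := cont_pz hw
  set N : ℝ → ℝ := fun s => II Lz (fun p => py v p * w (p.1, p.2 + s)) with hN_def
  set M : ℝ → ℝ := fun s => II Lz (fun p => v (p.1, p.2 - s) * py w p) with hM_def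
  -- Step 1 : N s + II (v · (py w)(·, ·+s)) = 0  (integration by parts in y)
  have step1 : ∀ s : ℝ, N s + II Lz (fun p => v p * py w (p.1, p.2 + s)) = 0 := by
    intro s
    have hcont1 : Continuous fun p : ℝ × ℝ => py v p * w (p.1, p.2 + s) := by fun_prop
    have hcont2 : Continuous fun p : ℝ × ℝ => v p * py w (p.1, p.2 + s) := by fun_prop
    rw [hN_def, ← II_add Lz _ _ hcont1 hcont2]
    have hΦ : ∀ y : ℝ, HasDerivAt (fun y' => ∫ z in (0:ℝ)..Lz, v (y', z) * w (y', z + s))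
        (∫ z in (0:ℝ)..Lz,
          (py v (y, z) * w (y, z + s) + v (y, z) * py w (y, z + s))) y := by
      intro y
      apply hasDerivAt_param (f := fun y' z => v (y', z) * w (y', z + s))
        (g := fun y' z => py v (y', z) * w (y', z + s) + v (y', z) * py w (y', z + s))
      · fun_prop
      · fun_prop
      · intro x t
        exact (hasDerivAt_py hv x t).mul (hasDerivAt_py hw x (t + s))
    have hcd : Continuous fun y : ℝ => ∫ z in (0:ℝ)..Lz,
        (py v (y, z) * w (y, z + s) + v (y, z) * py w (y, z + s)) := by fun_prop
    have hftc := ftc _ _ hΦ hcd 0 1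
    have h1 : (∫ z in (0:ℝ)..Lz, v (1, z) * w (1, z + s)) = 0 := by simp [hv1]
    have h0 : (∫ z in (0:ℝ)..Lz, v (0, z) * w (0, z + s)) = 0 := by simp [hv0]
    unfold II
    rw [hftc, h1, h0, sub_zero]
  -- Step 2 : shift identity in z
  have step2 : ∀ s : ℝ, II Lz (fun p => v p * py w (p.1, p.2 + s)) = M s := by
    intro s
    rw [hM_def]
    unfold II
    apply intervalIntegral.integral_congr
    intro y _
    exact shift_prod (fun z => v (y, z)) (fun z => py w (y, z))
      (fun z => hpv y z) (fun z => py_periodic hw hpw y z) s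
  have hNM : N = fun s => -M s := by
    funext s
    have h := step1 s
    rw [step2 s] at h
    simp only [hN_def, hM_def] at h ⊢
    linarith
  -- Step 3 : derivative of N at 0
  have hNder : HasDerivAt N (II Lz fun p => py v p * pz w p) 0 := by
    have houter := hasDerivAt_param
      (f := fun s y => ∫ z in (0:ℝ)..Lz, py v (y, z) * w (y, z + s))
      (g := fun s y => ∫ z in (0:ℝ)..Lz, py v (y, z) * pz w (y, z + s))
      (by fun_prop) (by fun_prop)
      (fun s y => by
        apply hasDerivAt_param (f := fun s' z => py v (y, z) * w (y, z + s'))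
          (g := fun s' z => py v (y, z) * pz w (y, z + s'))
          (by fun_prop) (by fun_prop)
        intro x t
        exact (hasDerivAt_shift_z hw y t x).const_mul (py v (y, t)))
      0 1 0
    have : (∫ y in (0:ℝ)..1, ∫ z in (0:ℝ)..Lz, py v (y, z) * pz w (y, z + 0))
        = II Lz fun p => py v p * pz w p := by
      unfold II; simp only [add_zero]
    rw [this] at houter
    exact houter
  -- Step 4 : derivative of M at 0
  have hMder : HasDerivAt M (-(II Lz fun p => pz v p * py w p)) 0 := by
    have houter := hasDerivAt_param
      (f := fun s y => ∫ z in (0:ℝ)..Lz, v (y, z - s) * py w (y, z))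
      (g := fun s y => ∫ z in (0:ℝ)..Lz, (-pz v (y, z - s)) * py w (y, z))
      (by fun_prop) (by fun_prop)
      (fun s y => by
        apply hasDerivAt_param (f := fun s' z => v (y, z - s') * py w (y, z))
          (g := fun s' z => (-pz v (y, z - s')) * py w (y, z))
          (by fun_prop) (by fun_prop)
        intro x t
        exact (hasDerivAt_shift_z_neg hv y t x).mul_const (py w (y, t)))
      0 1 0
    have heq : (∫ y in (0:ℝ)..1, ∫ z in (0:ℝ)..Lz, (-pz v (y, z - 0)) * py w (y, z))
        = -(II Lz fun p => pz v p * py w p) := by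
      unfold II
      simp [neg_mul, intervalIntegral.integral_neg]
    rw [heq] at houter
    exact houter
  -- conclude
  have hNder' : HasDerivAt N (II Lz fun p => pz v p * py w p) 0 := by
    rw [hNM]
    have := hMder.neg; rw [neg_neg] at this; exact this
  exact hNder.unique hNder'







variable {Lz : ℝ} {v w : ℝ × ℝ → ℝ}

/-- Poincaré in the y-direction for v (vanishing at y = 0). -/
lemma v_bound (hLz : 0 < Lz) (hv : ContDiff ℝ 1 v) (hv0 : ∀ z : ℝ, v (0, z) = 0) :
    II Lz (fun p => v p ^ 2) ≤ II Lz (fun p => (py v p) ^ 2) := by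
  have cv : Continuous v := hv.continuous
  have cvy : Continuous (py v) := cont_py hv
  have hpt : ∀ p ∈ Icc (0:ℝ) 1 ×ˢ Icc (0:ℝ) Lz,
      v p ^ 2 ≤ ∫ t in (0:ℝ)..1, (py v (t, p.2)) ^ 2 := by
    rintro ⟨y, z⟩ ⟨hy, _⟩
    have hftc : (∫ t in (0:ℝ)..y, py v (t, z)) = v (y, z) := by
      rw [ftc (fun t => v (t, z)) (fun t => py v (t, z))
        (fun t => hasDerivAt_py hv t z) (by fun_prop) 0 y, hv0 z, sub_zero]
    calc v (y, z) ^ 2 = (∫ t in (0:ℝ)..y, py v (t, z)) ^ 2 := by rw [hftc]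
      _ ≤ (y - 0) * ∫ t in (0:ℝ)..y, (py v (t, z)) ^ 2 :=
          cs_integral _ (by fun_prop) hy.1
      _ ≤ 1 * ∫ t in (0:ℝ)..1, (py v (t, z)) ^ 2 := by
          apply mul_le_mul (by linarith [hy.2])
            (sq_integral_mono_interval (by fun_prop) le_rfl hy.1 hy.2)
            (intervalIntegral.integral_nonneg hy.1 fun t _ => sq_nonneg _) zero_le_one
      _ = ∫ t in (0:ℝ)..1, (py v (t, z)) ^ 2 := one_mul _
  calc II Lz (fun p => v p ^ 2)
      ≤ II Lz (fun p => ∫ t in (0:ℝ)..1, (py v (t, p.2)) ^ 2) :=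
        II_mono_on hLz.le _ _ (by fun_prop) (by fun_prop) hpt
    _ = ∫ z in (0:ℝ)..Lz, ∫ t in (0:ℝ)..1, (py v (t, z)) ^ 2 := by
        show (∫ y in (0:ℝ)..1, ∫ z in (0:ℝ)..Lz, ∫ t in (0:ℝ)..1, (py v (t, z)) ^ 2) = _
        rw [intervalIntegral.integral_const]
        simp
    _ = II Lz (fun p => (py v p) ^ 2) :=
        (II_swap hLz.le (fun p => (py v p) ^ 2) (by fun_prop)).symm

/-- bound for w using zero circulation at y = 0 and Poincaré on circles. -/
lemma w_bound (hLz : 0 < Lz) (hw : ContDiff ℝ 1 w)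
    (hpw : ∀ y z : ℝ, w (y, z + Lz) = w (y, z))
    (hw0 : (∫ z in (0:ℝ)..Lz, w (0, z)) = 0) :
    II Lz (fun p => w p ^ 2) ≤ 2 * Lz ^ 2 * II Lz (fun p => (pz w p) ^ 2)
      + 2 * II Lz (fun p => (py w p) ^ 2) := by
  have cw : Continuous w := hw.continuous
  have cwy : Continuous (py w) := cont_py hw
  have cwz : Continuous (pz w) := cont_pz hw
  set m : ℝ → ℝ := fun y => ∫ z in (0:ℝ)..Lz, w (y, z) with hm_def
  set mu : ℝ → ℝ := fun y => ∫ z in (0:ℝ)..Lz, py w (y, z) with hmu_def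
  have hm_cont : Continuous m := by fun_prop
  have hmu_cont : Continuous mu := by fun_prop
  have hmder : ∀ y, HasDerivAt m (mu y) y := fun y =>
    hasDerivAt_param (fun y z => w (y, z)) (fun y z => py w (y, z))
      (by fun_prop) (by fun_prop) (fun x t => hasDerivAt_py hw x t) 0 Lz y
  set Qy := II Lz (fun p => (py w p) ^ 2) with hQy_def
  set Qz := II Lz (fun p => (pz w p) ^ 2) with hQz_def
  have hQy_nonneg : 0 ≤ Qy :=
    II_nonneg hLz.le _ (by fun_prop) fun p _ => sq_nonneg _
  -- (m y)^2 ≤ Lz * Qy  for y ∈ [0,1]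
  have hmsq : ∀ y ∈ Icc (0:ℝ) 1, (m y) ^ 2 ≤ Lz * Qy := by
    intro y hy
    have hm0 : m 0 = 0 := hw0
    have hftc : (∫ t in (0:ℝ)..y, mu t) = m y := by
      rw [ftc m mu hmder hmu_cont 0 y, hm0, sub_zero]
    have hmu_sq : ∀ t ∈ Icc (0:ℝ) 1, (mu t) ^ 2 ≤ Lz * ∫ z in (0:ℝ)..Lz, (py w (t, z)) ^ 2 := by
      intro t _
      simpa using cs_integral (fun z => py w (t, z)) (by fun_prop) hLz.le
    calc (m y) ^ 2 = (∫ t in (0:ℝ)..y, mu t) ^ 2 := by rw [hftc]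
      _ ≤ (y - 0) * ∫ t in (0:ℝ)..y, (mu t) ^ 2 := cs_integral _ hmu_cont hy.1
      _ ≤ 1 * ∫ t in (0:ℝ)..1, (mu t) ^ 2 := by
          apply mul_le_mul (by linarith [hy.2])
            (sq_integral_mono_interval hmu_cont le_rfl hy.1 hy.2)
            (intervalIntegral.integral_nonneg hy.1 fun t _ => sq_nonneg _) zero_le_one
      _ = ∫ t in (0:ℝ)..1, (mu t) ^ 2 := one_mul _
      _ ≤ ∫ t in (0:ℝ)..1, (Lz * ∫ z in (0:ℝ)..Lz, (py w (t, z)) ^ 2) :=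
          intervalIntegral.integral_mono_on zero_le_one
            ((hmu_cont.pow 2).intervalIntegrable _ _) (by
              apply Continuous.intervalIntegrable; fun_prop) hmu_sq
      _ = Lz * Qy := by
          rw [intervalIntegral.integral_const_mul, hQy_def]; rfl
  -- slice bound
  have hslice : ∀ y ∈ Icc (0:ℝ) 1,
      (∫ z in (0:ℝ)..Lz, (w (y, z)) ^ 2)
        ≤ 2 * Lz ^ 2 * (∫ z in (0:ℝ)..Lz, (pz w (y, z)) ^ 2) + 2 * (m y) ^ 2 / Lz := by
    intro y _
    set c := m y / Lz with hc_def
    have hmean : (∫ z in (0:ℝ)..Lz, (w (y, z) - c)) = 0 := by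
      rw [intervalIntegral.integral_sub
        (Continuous.intervalIntegrable (by fun_prop) _ _)
        intervalIntegrable_const, intervalIntegral.integral_const]
      rw [hc_def]
      simp only [sub_zero, smul_eq_mul, mul_div_cancel₀ _ hLz.ne']
      exact sub_eq_zero.mpr rfl
    have hpoin := poincare (fun z => w (y, z) - c) (fun z => pz w (y, z)) (by fun_prop)
      (fun z => (hasDerivAt_pz hw y z).sub_const c) hLz hmean
    calc (∫ z in (0:ℝ)..Lz, (w (y, z)) ^ 2)
        ≤ ∫ z in (0:ℝ)..Lz, (2 * (w (y, z) - c) ^ 2 + 2 * c ^ 2) := by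
          apply intervalIntegral.integral_mono_on hLz.le
            (by apply Continuous.intervalIntegrable; fun_prop)
            (by apply Continuous.intervalIntegrable; fun_prop)
          intro z _
          nlinarith [sq_nonneg (w (y, z) - 2 * c)]
      _ = 2 * (∫ z in (0:ℝ)..Lz, (w (y, z) - c) ^ 2) + 2 * c ^ 2 * Lz := by
          rw [intervalIntegral.integral_add
            (by apply Continuous.intervalIntegrable; fun_prop)
            intervalIntegrable_const,
            intervalIntegral.integral_const_mul, intervalIntegral.integral_const]
          simp [smul_eq_mul]
          ring
      _ ≤ 2 * (Lz ^ 2 * ∫ z in (0:ℝ)..Lz, (pz w (y, z)) ^ 2) + 2 * c ^ 2 * Lz := by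
          linarith [hpoin]
      _ = 2 * Lz ^ 2 * (∫ z in (0:ℝ)..Lz, (pz w (y, z)) ^ 2) + 2 * (m y) ^ 2 / Lz := by
          rw [hc_def]
          field_simp
  -- integrate the slice bound in y
  have hQz_eq : (∫ y in (0:ℝ)..1, ∫ z in (0:ℝ)..Lz, (pz w (y, z)) ^ 2) = Qz := rfl
  calc II Lz (fun p => w p ^ 2)
      = ∫ y in (0:ℝ)..1, ∫ z in (0:ℝ)..Lz, (w (y, z)) ^ 2 := rfl
    _ ≤ ∫ y in (0:ℝ)..1,
          (2 * Lz ^ 2 * (∫ z in (0:ℝ)..Lz, (pz w (y, z)) ^ 2) + 2 * Qy) := by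
        apply intervalIntegral.integral_mono_on zero_le_one
          (by apply Continuous.intervalIntegrable; fun_prop)
          (by apply Continuous.intervalIntegrable; fun_prop)
        intro y hy
        refine le_trans (hslice y hy) ?_
        have h1 := hmsq y hy
        have h2 : 2 * (m y) ^ 2 / Lz ≤ 2 * Qy := by
          rw [div_le_iff₀ hLz]
          nlinarith
        linarith
    _ = 2 * Lz ^ 2 * Qz + 2 * Qy := by
        rw [intervalIntegral.integral_add
          (by apply Continuous.intervalIntegrable; fun_prop)
          intervalIntegrable_const,
          intervalIntegral.integral_const_mul, hQz_eq, intervalIntegral.integral_const]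
        simp [smul_eq_mul]




variable {Lz : ℝ} {v w : ℝ × ℝ → ℝ}

lemma key (hLz : 0 < Lz) (hv : ContDiff ℝ 1 v) (hw : ContDiff ℝ 1 w)
    (hpv : ∀ y z : ℝ, v (y, z + Lz) = v (y, z))
    (hpw : ∀ y z : ℝ, w (y, z + Lz) = w (y, z))
    (hv0 : ∀ z : ℝ, v (0, z) = 0) (hv1 : ∀ z : ℝ, v (1, z) = 0)
    (hw0 : (∫ z in (0:ℝ)..Lz, w (0, z)) = 0) :
    II Lz (fun p => v p ^ 2 + w p ^ 2)
      ≤ (3 + 2 * Lz ^ 2) *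
        II Lz (fun p => (py v p + pz w p) ^ 2 + (py w p - pz v p) ^ 2) := by
  have cv : Continuous v := hv.continuous
  have cw : Continuous w := hw.continuous
  have cvy : Continuous (py v) := cont_py hv
  have cvz : Continuous (pz v) := cont_pz hv
  have cwy : Continuous (py w) := cont_py hw
  have cwz : Continuous (pz w) := cont_pz hw
  set P := II Lz (fun p => (py v p) ^ 2) with hP_def
  set R := II Lz (fun p => (pz v p) ^ 2) with hR_def
  set Qy := II Lz (fun p => (py w p) ^ 2) with hQy_def
  set Qz := II Lz (fun p => (pz w p) ^ 2) with hQz_def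
  set S := II Lz (fun p => (py v p + pz w p) ^ 2 + (py w p - pz v p) ^ 2) with hS_def
  -- expansion of S
  have hpoint : (fun p : ℝ × ℝ => (py v p + pz w p) ^ 2 + (py w p - pz v p) ^ 2)
      = fun p => ((((py v p) ^ 2 + (pz w p) ^ 2) + ((py w p) ^ 2 + (pz v p) ^ 2))
        + (2 * (py v p * pz w p) - 2 * (pz v p * py w p))) := by
    funext p; ring
  have hexp : S = P + Qz + Qy + R := by
    rw [hS_def, hpoint, II_add Lz _ _ (by fun_prop) (by fun_prop),
      II_add Lz _ _ (by fun_prop) (by fun_prop),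
      II_add Lz _ _ (by fun_prop) (by fun_prop),
      II_add Lz _ _ (by fun_prop) (by fun_prop),
      II_sub Lz _ _ (by fun_prop) (by fun_prop),
      II_const_mul Lz 2 (fun p => py v p * pz w p),
      II_const_mul Lz 2 (fun p => pz v p * py w p),
      cross_eq hv hw hpv hpw hv0 hv1]
    ring
  have hP_nonneg : 0 ≤ P := II_nonneg hLz.le _ (by fun_prop) fun p _ => sq_nonneg _
  have hR_nonneg : 0 ≤ R := II_nonneg hLz.le _ (by fun_prop) fun p _ => sq_nonneg _
  have hQy_nonneg : 0 ≤ Qy := II_nonneg hLz.le _ (by fun_prop) fun p _ => sq_nonneg _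
  have hQz_nonneg : 0 ≤ Qz := II_nonneg hLz.le _ (by fun_prop) fun p _ => sq_nonneg _
  have hva := v_bound hLz hv hv0
  have hwa := w_bound hLz hw hpw hw0
  rw [II_add Lz _ _ (by fun_prop) (by fun_prop)]
  have hP_le : P ≤ S := by rw [hexp]; linarith
  have hQy_le : Qy ≤ S := by rw [hexp]; linarith
  have hQz_le : Qz ≤ S := by rw [hexp]; linarith
  have hLz2 : (0:ℝ) ≤ 2 * Lz ^ 2 := by positivity
  have h1 : 2 * Lz ^ 2 * Qz ≤ 2 * Lz ^ 2 * S := mul_le_mul_of_nonneg_left hQz_le hLz2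
  calc II Lz (fun p => v p ^ 2) + II Lz (fun p => w p ^ 2)
      ≤ P + (2 * Lz ^ 2 * Qz + 2 * Qy) := by
        rw [← hP_def, ← hQy_def, ← hQz_def] at *
        linarith
    _ ≤ S + (2 * Lz ^ 2 * S + 2 * S) := by linarith
    _ = (3 + 2 * Lz ^ 2) * S := by ring


end DC

open Real Set intervalIntegral

theorem div_curl_estimate_periodic_strip (Lz : ℝ) (hLz : 0 < Lz) :
    ∃ c₀ > 0, ∀ v w : ℝ × ℝ → ℝ,
      ContDiff ℝ 1 v → ContDiff ℝ 1 w →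
      (∀ y z : ℝ, v (y, z + Lz) = v (y, z)) →
      (∀ y z : ℝ, w (y, z + Lz) = w (y, z)) →
      (∀ z : ℝ, v (0, z) = 0) → (∀ z : ℝ, v (1, z) = 0) →
      (∫ z in (0:ℝ)..Lz, w (0, z)) = 0 →
      (∫ z in (0:ℝ)..Lz, w (1, z)) = 0 →
      Real.sqrt (∫ y in (0:ℝ)..1, ∫ z in (0:ℝ)..Lz, (v (y, z)) ^ 2 + (w (y, z)) ^ 2)
        ≤ c₀ *
          (Real.sqrt (∫ y in (0:ℝ)..1, ∫ z in (0:ℝ)..Lz,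
              (deriv (fun t => v (t, z)) y + deriv (fun t => w (y, t)) z) ^ 2)
           + Real.sqrt (∫ y in (0:ℝ)..1, ∫ z in (0:ℝ)..Lz,
              (deriv (fun t => w (t, z)) y - deriv (fun t => v (y, t)) z) ^ 2)) := by
  refine ⟨Real.sqrt (3 + 2 * Lz ^ 2), Real.sqrt_pos.mpr (by positivity), ?_⟩
  intro v w hv hw hpv hpw hv0 hv1 hw0 hw1
  have cv : Continuous v := hv.continuous
  have cw : Continuous w := hw.continuous
  have cvy : Continuous (DC.py v) := DC.cont_py hv
  have cvz : Continuous (DC.pz v) := DC.cont_pz hv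
  have cwy : Continuous (DC.py w) := DC.cont_py hw
  have cwz : Continuous (DC.pz w) := DC.cont_pz hw
  have hSDeq : (∫ y in (0:ℝ)..1, ∫ z in (0:ℝ)..Lz,
      (deriv (fun t => v (t, z)) y + deriv (fun t => w (y, t)) z) ^ 2)
      = DC.II Lz (fun p => (DC.py v p + DC.pz w p) ^ 2) := by
    apply intervalIntegral.integral_congr
    intro y _
    apply intervalIntegral.integral_congr
    intro z _
    simp only [DC.deriv_py hv, DC.deriv_pz hw]
  have hSCeq : (∫ y in (0:ℝ)..1, ∫ z in (0:ℝ)..Lz,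
      (deriv (fun t => w (t, z)) y - deriv (fun t => v (y, t)) z) ^ 2)
      = DC.II Lz (fun p => (DC.py w p - DC.pz v p) ^ 2) := by
    apply intervalIntegral.integral_congr
    intro y _
    apply intervalIntegral.integral_congr
    intro z _
    simp only [DC.deriv_py hw, DC.deriv_pz hv]
  have hLHSeq : (∫ y in (0:ℝ)..1, ∫ z in (0:ℝ)..Lz, (v (y, z)) ^ 2 + (w (y, z)) ^ 2)
      = DC.II Lz (fun p => v p ^ 2 + w p ^ 2) := rfl
  rw [hSDeq, hSCeq, hLHSeq]
  have hSD0 : 0 ≤ DC.II Lz (fun p => (DC.py v p + DC.pz w p) ^ 2) :=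
    DC.II_nonneg hLz.le _ (by fun_prop) fun p _ => sq_nonneg _
  have hSC0 : 0 ≤ DC.II Lz (fun p => (DC.py w p - DC.pz v p) ^ 2) :=
    DC.II_nonneg hLz.le _ (by fun_prop) fun p _ => sq_nonneg _
  have hsplit : DC.II Lz (fun p => (DC.py v p + DC.pz w p) ^ 2 + (DC.py w p - DC.pz v p) ^ 2)
      = DC.II Lz (fun p => (DC.py v p + DC.pz w p) ^ 2)
        + DC.II Lz (fun p => (DC.py w p - DC.pz v p) ^ 2) :=
    DC.II_add Lz _ _ (by fun_prop) (by fun_prop)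
  have hkey := DC.key hLz hv hw hpv hpw hv0 hv1 hw0
  rw [hsplit] at hkey
  calc Real.sqrt (DC.II Lz (fun p => v p ^ 2 + w p ^ 2))
      ≤ Real.sqrt ((3 + 2 * Lz ^ 2) *
          (DC.II Lz (fun p => (DC.py v p + DC.pz w p) ^ 2)
            + DC.II Lz (fun p => (DC.py w p - DC.pz v p) ^ 2))) := Real.sqrt_le_sqrt hkey
    _ = Real.sqrt (3 + 2 * Lz ^ 2) *
          Real.sqrt (DC.II Lz (fun p => (DC.py v p + DC.pz w p) ^ 2)
            + DC.II Lz (fun p => (DC.py w p - DC.pz v p) ^ 2)) :=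
        Real.sqrt_mul (by positivity) _
    _ ≤ Real.sqrt (3 + 2 * Lz ^ 2) *
          (Real.sqrt (DC.II Lz (fun p => (DC.py v p + DC.pz w p) ^ 2))
            + Real.sqrt (DC.II Lz (fun p => (DC.py w p - DC.pz v p) ^ 2))) :=
        mul_le_mul_of_nonneg_left (DC.sqrt_add_le' _ _ hSD0 hSC0) (Real.sqrt_nonneg _)
end
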